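/- Let f ∈ ℚ[X] be a polynomial of degree d ≥ 2. There exists a constant C depending only on f such that for all α ∈ ℚ and all n ≥ 1, the Weil height satisfies h(f^{(n)}(α)) ≥ d^n · (h(α) - C), where f^{(n)} denotes the n-th iterate of f. -/

import Mathlib

open Polynomial

/-- The Weil logarithmic height of a rational number `a/b` in lowest terms:
`h(a/b) = max (log |a|) (log |b|)`. -/
noncomputable def weilHeight (q : ℚ) : ℝ :=
  Real.log (max (q.num.natAbs : ℝ) (q.den : ℝ))

private lemma core_gcd (a P R : ℤ) (q d : ℕ) (hq : q ≠ 0) (ha : a ≠ 0) (hd : 1 ≤ d)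
    (hcop : Nat.Coprime P.natAbs q) (hG : a * P ^ d + (q : ℤ) * R ≠ 0) :
    Nat.gcd (a * P ^ d + (q : ℤ) * R).natAbs (q ^ d) ∣ a.natAbs ^ d := by
  set G : ℤ := a * P ^ d + (q : ℤ) * R with hGdef
  have hGn : G.natAbs ≠ 0 := Int.natAbs_ne_zero.mpr hG
  have hqd : q ^ d ≠ 0 := pow_ne_zero _ hq
  have hA : a.natAbs ≠ 0 := Int.natAbs_ne_zero.mpr ha
  have hgcd0 : Nat.gcd G.natAbs (q ^ d) ≠ 0 := Nat.gcd_ne_zero_left hGn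
  rw [← Nat.factorization_le_iff_dvd hgcd0 (pow_ne_zero _ hA)]
  rw [Nat.factorization_gcd hGn hqd]
  intro ℓ
  rw [Finsupp.inf_apply]
  by_cases hℓ : ℓ.Prime
  · rw [Nat.factorization_pow, Nat.factorization_pow, Finsupp.smul_apply, Finsupp.smul_apply,
      smul_eq_mul, smul_eq_mul]
    set vq := q.factorization ℓ
    set va := a.natAbs.factorization ℓ with hva
    rcases Nat.eq_zero_or_pos vq with h0 | hpos
    · exact le_trans (min_le_right _ _) (by simp [h0])
    rcases le_or_gt vq va with hle | hlt
    · exact le_trans (min_le_right _ _) (Nat.mul_le_mul_left d hle)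
    have hvG : G.natAbs.factorization ℓ ≤ va := by
      by_contra hc
      push_neg at hc
      have h1 : ℓ ^ (va + 1) ∣ G.natAbs :=
        (Nat.Prime.pow_dvd_iff_le_factorization hℓ hGn).mpr hc
      have h2 : ℓ ^ (va + 1) ∣ q :=
        (Nat.Prime.pow_dvd_iff_le_factorization hℓ hq).mpr (by omega)
      have h3 : (ℓ : ℤ) ^ (va + 1) ∣ (q : ℤ) * R :=
        Dvd.dvd.mul_right (by exact_mod_cast Int.natCast_dvd_natCast.mpr h2) R
      have h4 : (ℓ : ℤ) ^ (va + 1) ∣ G := by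
        have h4' : ((ℓ ^ (va + 1) : ℕ) : ℤ) ∣ G := Int.natCast_dvd.mpr h1
        exact_mod_cast h4'
      have h5 : (ℓ : ℤ) ^ (va + 1) ∣ a * P ^ d := by
        have := dvd_sub h4 h3
        simpa [hGdef] using this
      have h6 : ℓ ^ (va + 1) ∣ a.natAbs * P.natAbs ^ d := by
        have h6' : ((ℓ ^ (va + 1) : ℕ) : ℤ) ∣ a * P ^ d := by exact_mod_cast h5
        rw [Int.natCast_dvd] at h6'
        simpa [Int.natAbs_mul, Int.natAbs_pow] using h6'
      have hℓq : ℓ ∣ q := (Nat.Prime.dvd_iff_one_le_factorization hℓ hq).mpr hpos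
      have hℓP : ¬ ℓ ∣ P.natAbs := by
        intro hdvd
        have : ℓ ∣ Nat.gcd P.natAbs q := Nat.dvd_gcd hdvd hℓq
        rw [hcop] at this
        exact hℓ.one_lt.ne' (Nat.eq_one_of_dvd_one this)
      have hcop2 : Nat.Coprime (ℓ ^ (va + 1)) (P.natAbs ^ d) :=
        Nat.Coprime.pow _ _ ((Nat.Prime.coprime_iff_not_dvd hℓ).mpr hℓP)
      have h7 : ℓ ^ (va + 1) ∣ a.natAbs := hcop2.dvd_of_dvd_mul_right h6
      have := (Nat.Prime.pow_dvd_iff_le_factorization hℓ hA).mp h7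
      omega
    calc min (G.natAbs.factorization ℓ) (d * vq) ≤ va := le_trans (min_le_left _ _) hvG
      _ ≤ d * va := Nat.le_mul_of_pos_left va (by omega)
  · simp [Nat.factorization_eq_zero_of_not_prime _ hℓ]

private lemma exists_k (G N : ℤ) (hN : 0 < N) (β : ℚ) (hβ : β * (N : ℚ) = (G : ℚ)) :
    ∃ k : ℤ, 0 < k ∧ (β.den : ℤ) * k = N ∧ β.num * k = G := by
  have hden0 : (β.den : ℚ) ≠ 0 := by exact_mod_cast β.den_nz
  have hnum : (β.num : ℚ) = β * (β.den : ℚ) := (div_eq_iff hden0).mp (Rat.num_div_den β)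
  have key : (β.num : ℚ) * (N : ℚ) = (G : ℚ) * (β.den : ℚ) := by
    rw [hnum, mul_right_comm, hβ]
  have keyZ : β.num * N = G * (β.den : ℤ) := by exact_mod_cast key
  have hcop : IsCoprime ((β.den : ℤ)) (β.num) := by
    rw [Int.isCoprime_iff_gcd_eq_one]
    simpa [Int.gcd, Nat.coprime_comm] using β.reduced
  have hdvd : (β.den : ℤ) ∣ N := by
    apply hcop.dvd_of_dvd_mul_left
    exact ⟨G, by linarith [keyZ]⟩
  obtain ⟨k, hk⟩ := hdvd
  have hdpos : (0 : ℤ) < (β.den : ℤ) := by exact_mod_cast β.pos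
  have hkpos : 0 < k := by nlinarith
  refine ⟨k, hkpos, hk.symm, ?_⟩
  have h2 : β.num * k * (β.den : ℤ) = G * (β.den : ℤ) := by
    rw [hk] at keyZ; linear_combination keyZ
  exact mul_right_cancel₀ hdpos.ne' h2

private lemma eval_mul_eq (f : ℚ[X]) (d : ℕ) (hd : f.natDegree = d) (b : ℕ)
    (g : ℕ → ℤ) (hg : ∀ i, i ≤ d → ((g i : ℚ)) = f.coeff i * b) (α : ℚ) :
    f.eval α * ((b : ℚ) * (α.den : ℚ) ^ d)
      = ((∑ i ∈ Finset.range (d + 1), g i * α.num ^ i * (α.den : ℤ) ^ (d - i) : ℤ) : ℚ) := by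
  have hq0 : ((α.den : ℚ)) ≠ 0 := by exact_mod_cast α.den_nz
  have hnum : (α.num : ℚ) = α * (α.den : ℚ) := (div_eq_iff hq0).mp (Rat.num_div_den α)
  rw [Polynomial.eval_eq_sum_range' (n := d + 1) (by omega)]
  push_cast
  rw [Finset.sum_mul]
  apply Finset.sum_congr rfl
  intro i hi
  have hi' : i ≤ d := Nat.lt_succ_iff.mp (Finset.mem_range.mp hi)
  have hsplit : ((α.den : ℚ)) ^ d = (α.den : ℚ) ^ i * (α.den : ℚ) ^ (d - i) := by
    rw [← pow_add, Nat.add_sub_cancel' hi']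
  calc f.coeff i * α ^ i * ((b : ℚ) * (α.den : ℚ) ^ d)
      = (f.coeff i * (b : ℚ)) * ((α * (α.den : ℚ)) ^ i) * (α.den : ℚ) ^ (d - i) := by
        rw [hsplit, mul_pow]; ring
    _ = (g i : ℚ) * (α.num : ℚ) ^ i * (α.den : ℚ) ^ (d - i) := by
        rw [← hg i hi', ← hnum]

private lemma sum_decomp (g : ℕ → ℤ) (p : ℤ) (q : ℤ) (d : ℕ) (hd : 1 ≤ d) :
    (∑ i ∈ Finset.range (d + 1), g i * p ^ i * q ^ (d - i))
      = g d * p ^ d + q * (∑ i ∈ Finset.range d, g i * p ^ i * q ^ (d - 1 - i)) := by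
  rw [Finset.sum_range_succ, Nat.sub_self, pow_zero, mul_one, Finset.mul_sum, add_comm]
  congr 1
  apply Finset.sum_congr rfl
  intro i hi
  have hi' : i < d := Finset.mem_range.mp hi
  have : d - i = (d - 1 - i) + 1 := by omega
  rw [this, pow_succ]
  ring

lemma weilHeight_nonneg (q : ℚ) : 0 ≤ weilHeight q := by
  apply Real.log_nonneg
  have : (1 : ℝ) ≤ (q.den : ℝ) := by exact_mod_cast q.pos
  exact le_max_of_le_right this

private lemma weilHeight_eq (q : ℚ) :
    weilHeight q = Real.log ((max q.num.natAbs q.den : ℕ) : ℝ) := by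
  rw [weilHeight, Nat.cast_max]

set_option maxHeartbeats 1000000 in
private lemma key_mul (f : ℚ[X]) (d : ℕ) (hd : f.natDegree = d) (hd2 : 2 ≤ d) :
    ∃ B : ℤ, 1 ≤ B ∧ ∀ α : ℚ, f.eval α ≠ 0 →
      ((max α.num.natAbs α.den : ℕ) : ℤ) ^ d
        ≤ B * ((max (f.eval α).num.natAbs (f.eval α).den : ℕ) : ℤ) := by
  have hf0 : f ≠ 0 := fun h => by simp [h] at hd; omega
  set b : ℕ := ∏ i ∈ Finset.range (d + 1), (f.coeff i).den with hbdef
  have hb : 0 < b := Finset.prod_pos (fun i _ => (f.coeff i).pos)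
  set g : ℕ → ℤ := fun i => (f.coeff i * b).num with hgdef
  have hg : ∀ i, i ≤ d → ((g i : ℚ)) = f.coeff i * b := by
    intro i hi
    obtain ⟨m, hm⟩ := Finset.dvd_prod_of_mem (fun j => (f.coeff j).den)
      (Finset.mem_range.mpr (Nat.lt_succ_of_le hi))
    have hbm : b = (f.coeff i).den * m := hm
    have hden0 : ((f.coeff i).den : ℚ) ≠ 0 := by exact_mod_cast (f.coeff i).den_nz
    have hnum : ((f.coeff i).num : ℚ) = f.coeff i * ((f.coeff i).den : ℚ) :=
      (div_eq_iff hden0).mp (Rat.num_div_den _)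
    have hint : f.coeff i * (b : ℚ) = (((f.coeff i).num * m : ℤ) : ℚ) := by
      rw [hbm]
      push_cast
      rw [← mul_assoc, ← hnum]
    have hgi : g i = (f.coeff i).num * m := by
      rw [hgdef]; simp only; rw [hint, Rat.num_intCast]
    rw [hgi, hint]
  have hcd : f.coeff d ≠ 0 := by
    rw [← hd, coeff_natDegree]
    exact leadingCoeff_ne_zero.mpr hf0
  have hgd : g d ≠ 0 := by
    rw [hgdef]; simp only
    rw [Rat.num_ne_zero]
    exact mul_ne_zero hcd (by exact_mod_cast hb.ne')
  set S : ℤ := ∑ i ∈ Finset.range d, |g i| with hSdef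
  have hS : 0 ≤ S := Finset.sum_nonneg fun i _ => abs_nonneg _
  set Rc : ℤ := 2 * S + 1 with hRcdef
  have hRc : 1 ≤ Rc := by omega
  set A : ℤ := |g d| with hAdef
  have hA1 : 1 ≤ A := Int.one_le_abs (by omega)
  have hA0 : 0 < A := by linarith
  have hRc0 : 0 < Rc := by linarith
  have hbZ : (1 : ℤ) ≤ (b : ℤ) := by exact_mod_cast hb
  have hRcd : (1 : ℤ) ≤ Rc ^ d := by simpa using pow_le_pow_left₀ zero_le_one hRc d
  have hAd : (1 : ℤ) ≤ A ^ d := by simpa using pow_le_pow_left₀ zero_le_one hA1 d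
  refine ⟨2 * b * A ^ d * Rc ^ d, ?_, ?_⟩
  · have hx : (0 : ℤ) < 2 * b * A ^ d * Rc ^ d := by positivity
    omega
  intro α hne
  set p := α.num with hpdef
  set q : ℤ := (α.den : ℤ) with hqdef
  have hq1 : 1 ≤ q := by rw [hqdef]; exact_mod_cast α.pos
  set P : ℤ := (α.num.natAbs : ℤ) with hPdef
  have hPabs : P = |p| := by rw [hPdef, hpdef]; exact (Int.abs_eq_natAbs _).symm
  have hP0 : 0 ≤ P := by rw [hPabs]; exact abs_nonneg _
  set G : ℤ := ∑ i ∈ Finset.range (d + 1), g i * p ^ i * q ^ (d - i) with hGdef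
  set N : ℤ := (b : ℤ) * q ^ d with hNdef
  have hN : 0 < N := by rw [hNdef]; positivity
  have hid : f.eval α * (N : ℚ) = (G : ℚ) := by
    have h := eval_mul_eq f d hd b g hg α
    have hcast : ((N : ℤ) : ℚ) = (b : ℚ) * (α.den : ℚ) ^ d := by
      rw [hNdef, hqdef]; push_cast; ring
    rw [hcast, h]
  obtain ⟨k, hk0, hk1, hk2⟩ := exists_k G N hN (f.eval α) hid
  have hG0 : G ≠ 0 := by
    intro h0
    apply hne
    have h1 : f.eval α * (N : ℚ) = 0 := by rw [hid, h0]; simp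
    have h2 : (N : ℚ) ≠ 0 := by exact_mod_cast hN.ne'
    exact (mul_eq_zero.mp h1).resolve_right h2
  set Rterm : ℤ := ∑ i ∈ Finset.range d, g i * p ^ i * q ^ (d - 1 - i) with hRdef
  have hdec : G = g d * p ^ d + q * Rterm := by
    rw [hGdef]; exact sum_decomp g p q d (by omega)
  have hcore : Nat.gcd G.natAbs (α.den ^ d) ∣ (g d).natAbs ^ d := by
    rw [hdec, hqdef]
    rw [hdec, hqdef] at hG0
    exact core_gcd (g d) p Rterm α.den d α.den_nz hgd (by omega)
      (by rw [hpdef]; exact α.reduced) hG0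
  have hkG : k ∣ G := Dvd.intro_left _ hk2
  have hkN : k ∣ N := Dvd.intro_left _ hk1
  have h5 : k.natAbs ∣ b * (g d).natAbs ^ d := by
    have h1 : k.natAbs ∣ G.natAbs := Int.natAbs_dvd_natAbs.mpr hkG
    have h2 : k.natAbs ∣ b * α.den ^ d := by
      have h2' := Int.natAbs_dvd_natAbs.mpr hkN
      have hNabs : N.natAbs = b * α.den ^ d := by
        rw [hNdef, hqdef, Int.natAbs_mul, Int.natAbs_pow]
        simp
      rwa [hNabs] at h2'
    have h3 : k.natAbs ∣ Nat.gcd G.natAbs (b * α.den ^ d) := Nat.dvd_gcd h1 h2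
    have h4 : Nat.gcd G.natAbs (b * α.den ^ d) ∣ b * Nat.gcd G.natAbs (α.den ^ d) := by
      calc Nat.gcd G.natAbs (b * α.den ^ d)
          ∣ Nat.gcd (b * G.natAbs) (b * α.den ^ d) := Nat.gcd_dvd_gcd_mul_left_left _ _ _
        _ = b * Nat.gcd G.natAbs (α.den ^ d) := Nat.gcd_mul_left _ _ _
    exact h3.trans (h4.trans (mul_dvd_mul_left b hcore))
  have hbAcast : (((b * (g d).natAbs ^ d : ℕ)) : ℤ) = (b : ℤ) * A ^ d := by
    rw [hAdef, Int.abs_eq_natAbs]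
    push_cast
    ring
  have h5Z : k ∣ (b : ℤ) * A ^ d := by
    rw [← hbAcast, ← Int.natAbs_dvd]
    exact_mod_cast h5
  have hkb : k ≤ (b : ℤ) * A ^ d := Int.le_of_dvd (by positivity) h5Z
  set den : ℤ := ((f.eval α).den : ℤ) with hdendef
  have hden1 : 1 ≤ den := by rw [hdendef]; exact_mod_cast (f.eval α).pos
  have hdenb : q ^ d ≤ den * A ^ d := by
    obtain ⟨t, ht⟩ := h5Z
    have htpos : 0 < t := by
      have h0 : 0 < k * t := by rw [← ht]; positivity
      rcases mul_pos_iff.mp h0 with ⟨_, h⟩ | ⟨h, _⟩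
      · exact h
      · linarith
    have ht1 : 1 ≤ t := htpos
    have e1 : den * ((b : ℤ) * A ^ d) = (b : ℤ) * q ^ d * t := by
      rw [ht, ← mul_assoc, hk1, hNdef]
    have e2 : (b : ℤ) * q ^ d ≤ (b : ℤ) * q ^ d * t :=
      le_mul_of_one_le_right (by positivity) ht1
    have e3 : (b : ℤ) * q ^ d ≤ (b : ℤ) * (den * A ^ d) := by
      calc (b : ℤ) * q ^ d ≤ (b : ℤ) * q ^ d * t := e2
        _ = den * ((b : ℤ) * A ^ d) := e1.symm
        _ = (b : ℤ) * (den * A ^ d) := by ring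
    exact le_of_mul_le_mul_left e3 (by positivity)
  set numA : ℤ := ((f.eval α).num.natAbs : ℤ) with hnumAdef
  have hnumA0 : 0 ≤ numA := by rw [hnumAdef]; exact Int.natCast_nonneg _
  have hGabs : |G| = numA * k := by
    rw [hnumAdef, ← Int.abs_eq_natAbs, ← hk2, abs_mul, abs_of_pos hk0]
  have hM : ((max α.num.natAbs α.den : ℕ) : ℤ) = max P q := by
    rw [hPdef, hqdef]; exact Nat.cast_max _ _
  have hMβ : ((max (f.eval α).num.natAbs (f.eval α).den : ℕ) : ℤ) = max numA den := by
    rw [hnumAdef, hdendef]; exact Nat.cast_max _ _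
  rw [hM, hMβ]
  have hMβ1 : 1 ≤ max numA den := le_trans hden1 (le_max_right _ _)
  rcases le_total (Rc * q) P with hcase | hcase
  · -- |α| large
    rw [hRcdef] at hcase
    have hSq : 0 ≤ S * q := mul_nonneg hS (by linarith)
    have hqP : q ≤ P := by linarith only [hcase, hSq, hq1]
    have hP1 : 1 ≤ P := le_trans hq1 hqP
    have hmaxP : max P q = P := max_eq_left hqP
    have hX0 : (0:ℤ) ≤ P ^ (d - 1) := by positivity
    have hRbound : |Rterm| ≤ S * P ^ (d - 1) := by
      rw [hRdef]
      calc |∑ i ∈ Finset.range d, g i * p ^ i * q ^ (d - 1 - i)|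
          ≤ ∑ i ∈ Finset.range d, |g i * p ^ i * q ^ (d - 1 - i)| :=
            Finset.abs_sum_le_sum_abs _ _
        _ ≤ ∑ i ∈ Finset.range d, |g i| * P ^ (d - 1) := by
            apply Finset.sum_le_sum
            intro i hi
            rw [abs_mul, abs_mul, abs_pow, abs_pow, ← hPabs,
              abs_of_nonneg (by linarith : (0:ℤ) ≤ q)]
            have hqp : q ^ (d - 1 - i) ≤ P ^ (d - 1 - i) :=
              pow_le_pow_left₀ (by linarith) hqP _
            have hi' : i < d := Finset.mem_range.mp hi
            calc |g i| * P ^ i * q ^ (d - 1 - i)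
                ≤ |g i| * P ^ i * P ^ (d - 1 - i) := by
                  apply mul_le_mul_of_nonneg_left hqp
                  positivity
              _ = |g i| * P ^ (d - 1) := by
                  rw [mul_assoc, ← pow_add]
                  congr 2
                  omega
        _ = S * P ^ (d - 1) := by rw [hSdef, Finset.sum_mul]
    have hPd : P ^ d = P * P ^ (d - 1) := by
      rw [← pow_succ']
      congr 1
      omega
    have h2qS : 2 * S * q ≤ P := by linarith only [hcase, hSq, hq1]
    have habs2 : g d * p ^ d = G - q * Rterm := by rw [hdec]; ring
    have t1 : A * P ^ d ≤ |G| + q * (S * P ^ (d - 1)) := by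
      have e1 : A * P ^ d = |g d * p ^ d| := by
        rw [abs_mul, abs_pow, ← hPabs, ← hAdef]
      have e2 : |g d * p ^ d| ≤ |G| + |q * Rterm| := by
        rw [habs2]; exact abs_sub _ _
      have e3 : |q * Rterm| = q * |Rterm| := by
        rw [abs_mul, abs_of_nonneg (by linarith : (0:ℤ) ≤ q)]
      have e4 : q * |Rterm| ≤ q * (S * P ^ (d - 1)) :=
        mul_le_mul_of_nonneg_left hRbound (by linarith)
      calc A * P ^ d = |g d * p ^ d| := e1
        _ ≤ |G| + |q * Rterm| := e2
        _ = |G| + q * |Rterm| := by rw [e3]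
        _ ≤ |G| + q * (S * P ^ (d - 1)) := by linarith
    have t2 : 2 * (q * (S * P ^ (d - 1))) ≤ P ^ d := by
      have h := mul_le_mul_of_nonneg_right h2qS hX0
      calc 2 * (q * (S * P ^ (d - 1))) = (2 * S * q) * P ^ (d - 1) := by ring
        _ ≤ P * P ^ (d - 1) := h
        _ = P ^ d := hPd.symm
    have hAPd : P ^ d ≤ A * P ^ d :=
      le_mul_of_one_le_left (by positivity) hA1
    have hGlow : A * P ^ d ≤ 2 * |G| := by linarith
    rw [hmaxP]
    have c1 : P ^ d ≤ 2 * (numA * k) := by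
      rw [← hGabs]; linarith
    have c2 : numA * k ≤ numA * ((b : ℤ) * A ^ d) :=
      mul_le_mul_of_nonneg_left hkb hnumA0
    have c3 : numA ≤ max numA den := le_max_left _ _
    calc P ^ d ≤ 2 * (numA * ((b : ℤ) * A ^ d)) := by linarith
      _ = (2 * b * A ^ d) * numA := by ring
      _ ≤ (2 * b * A ^ d) * max numA den := by
          apply mul_le_mul_of_nonneg_left c3
          positivity
      _ ≤ (2 * b * A ^ d * Rc ^ d) * max numA den := by
          apply mul_le_mul_of_nonneg_right _ (by linarith : (0:ℤ) ≤ max numA den)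
          exact le_mul_of_one_le_right (by positivity) hRcd
  · -- |α| small
    have hmax : max P q ≤ Rc * q := by
      apply max_le hcase
      exact le_mul_of_one_le_left (by linarith) hRc
    have hmax0 : 0 ≤ max P q := le_trans (by linarith) (le_max_right _ _)
    calc (max P q) ^ d ≤ (Rc * q) ^ d := pow_le_pow_left₀ hmax0 hmax d
      _ = Rc ^ d * q ^ d := by rw [mul_pow]
      _ ≤ Rc ^ d * (den * A ^ d) := by
          apply mul_le_mul_of_nonneg_left hdenb
          positivity
      _ = (Rc ^ d * A ^ d) * den := by ring
      _ ≤ (2 * b * A ^ d * Rc ^ d) * max numA den := by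
          apply mul_le_mul _ (le_max_right _ _) (by linarith) (by positivity)
          calc Rc ^ d * A ^ d = 1 * (A ^ d * Rc ^ d) := by ring
            _ ≤ (2 * b) * (A ^ d * Rc ^ d) := by
                apply mul_le_mul_of_nonneg_right (by linarith) (by positivity)
            _ = 2 * b * A ^ d * Rc ^ d := by ring

theorem height_iterate_lower_bound (f : ℚ[X]) (d : ℕ) (hd : f.natDegree = d) (hd2 : 2 ≤ d) :
    ∃ C : ℝ, ∀ α : ℚ, ∀ n : ℕ, 1 ≤ n →
      (d : ℝ) ^ n * (weilHeight α - C) ≤ weilHeight ((fun x => f.eval x)^[n] α) := by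
  obtain ⟨B, hB1, hkey⟩ := key_mul f d hd hd2
  have hf0 : f ≠ 0 := fun h => by simp [h] at hd; omega
  set Croots : ℝ := (f.roots.map (fun r => (d : ℝ) * weilHeight r)).sum with hCr
  have hnn : ∀ x ∈ f.roots.map (fun r => (d : ℝ) * weilHeight r), 0 ≤ x := by
    intro x hx
    obtain ⟨r, _, rfl⟩ := Multiset.mem_map.mp hx
    exact mul_nonneg (by positivity) (weilHeight_nonneg r)
  have hCr0 : 0 ≤ Croots := Multiset.sum_nonneg hnn
  have hroot : ∀ α : ℚ, f.eval α = 0 → (d : ℝ) * weilHeight α ≤ Croots := by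
    intro α hα
    have hmem : α ∈ f.roots := by
      rw [Polynomial.mem_roots hf0]; exact hα
    exact Multiset.single_le_sum hnn _ (Multiset.mem_map_of_mem _ hmem)
  have hlogB : 0 ≤ Real.log B := Real.log_nonneg (by exact_mod_cast hB1)
  set C0 : ℝ := Real.log B + Croots with hC0
  have hC00 : 0 ≤ C0 := by rw [hC0]; linarith
  have hkeylog : ∀ α : ℚ, (d : ℝ) * weilHeight α ≤ weilHeight (f.eval α) + C0 := by
    intro α
    by_cases hz : f.eval α = 0
    · have h1 := hroot α hz
      have h2 := weilHeight_nonneg (f.eval α)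
      rw [hC0]; linarith
    · have h := hkey α hz
      have hM1 : 1 ≤ max α.num.natAbs α.den := le_trans α.pos (le_max_right _ _)
      have hMβ1 : 1 ≤ max (f.eval α).num.natAbs (f.eval α).den :=
        le_trans (f.eval α).pos (le_max_right _ _)
      have hR : ((max α.num.natAbs α.den : ℕ) : ℝ) ^ d
          ≤ (B : ℝ) * ((max (f.eval α).num.natAbs (f.eval α).den : ℕ) : ℝ) := by
        have h' := (@Int.cast_le ℝ _ _ _).mpr h
        push_cast [Nat.cast_natAbs] at h' ⊢
        exact h'
      have hMpos : (0 : ℝ) < ((max α.num.natAbs α.den : ℕ) : ℝ) := by exact_mod_cast hM1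
      have hMβpos : (0 : ℝ) < ((max (f.eval α).num.natAbs (f.eval α).den : ℕ) : ℝ) := by
        exact_mod_cast hMβ1
      have hBpos : (0 : ℝ) < (B : ℝ) := by exact_mod_cast lt_of_lt_of_le zero_lt_one hB1
      rw [weilHeight_eq α, weilHeight_eq (f.eval α), hC0]
      have l1 : Real.log (((max α.num.natAbs α.den : ℕ) : ℝ) ^ d)
          = (d : ℝ) * Real.log ((max α.num.natAbs α.den : ℕ) : ℝ) :=
        Real.log_pow _ _
      have l2 : Real.log (((max α.num.natAbs α.den : ℕ) : ℝ) ^ d)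
          ≤ Real.log ((B : ℝ) * ((max (f.eval α).num.natAbs (f.eval α).den : ℕ) : ℝ)) :=
        Real.log_le_log (by positivity) hR
      have l3 : Real.log ((B : ℝ) * ((max (f.eval α).num.natAbs (f.eval α).den : ℕ) : ℝ))
          = Real.log B + Real.log ((max (f.eval α).num.natAbs (f.eval α).den : ℕ) : ℝ) :=
        Real.log_mul hBpos.ne' hMβpos.ne'
      linarith
  have hdR : (0 : ℝ) < (d : ℝ) - 1 := by
    have : (2 : ℝ) ≤ (d : ℝ) := by exact_mod_cast hd2
    linarith
  refine ⟨C0 / ((d : ℝ) - 1), ?_⟩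
  set C := C0 / ((d : ℝ) - 1) with hCdef
  have hCeq : ((d : ℝ) - 1) * C = C0 := by
    rw [hCdef]; field_simp
  have hC0' : 0 ≤ C := div_nonneg hC00 (by linarith)
  have hstep : ∀ γ : ℚ, (d : ℝ) * (weilHeight γ - C) ≤ weilHeight (f.eval γ) - C := by
    intro γ
    have := hkeylog γ
    linarith
  have hiter : ∀ α : ℚ, ∀ n : ℕ,
      (d : ℝ) ^ n * (weilHeight α - C) ≤ weilHeight ((fun x => f.eval x)^[n] α) - C := by
    intro α n
    induction n with
    | zero => simp
    | succ n ih =>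
      rw [Function.iterate_succ_apply']
      calc (d : ℝ) ^ (n + 1) * (weilHeight α - C)
          = (d : ℝ) * ((d : ℝ) ^ n * (weilHeight α - C)) := by ring
        _ ≤ (d : ℝ) * (weilHeight ((fun x => f.eval x)^[n] α) - C) :=
            mul_le_mul_of_nonneg_left ih (by positivity)
        _ ≤ _ := hstep _
  intro α n _
  have h1 := hiter α n
  linarith
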